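/- Let V be a set and Φ : V → V, ρ : V → ℂ two maps. The formula (Th)(v) := ρ(v)·h(Φ(v)) defines a (well-defined, bounded) linear isometry T of ℓ²(V) if and only if Φ is surjective and for every v ∈ V, ∑_{w ∈ Φ⁻¹(v)} |ρ(w)|² = 1. -/

import Mathlib

private lemma key11 {V : Type*} (Φ : V → V) (ρ : V → ℂ)
    (hρ : ∀ v : V, HasSum (fun w : (Φ ⁻¹' {v} : Set V) => ‖ρ (w : V)‖ ^ 2) 1)
    (h : V → ℂ) {S : ℝ} (hS : HasSum (fun v => ‖h v‖ ^ 2) S) :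
    HasSum (fun v => ‖ρ v * h (Φ v)‖ ^ 2) S := by
  set e := Equiv.sigmaFiberEquiv Φ with he
  rw [← e.hasSum_iff]
  set f : (Σ w : V, (Φ ⁻¹' {w} : Set V)) → ℝ :=
    (fun v => ‖ρ v * h (Φ v)‖ ^ 2) ∘ e with hf
  have hfib : ∀ w : V, HasSum (fun v : (Φ ⁻¹' {w} : Set V) => f ⟨w, v⟩) (‖h w‖^2) := by
    intro w
    have := (hρ w).mul_right (‖h w‖ ^ 2)
    rw [one_mul] at this
    refine this.congr_fun fun v => ?_
    have hv : Φ (v : V) = w := v.2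
    simp only [hf, he, Function.comp_apply, Equiv.sigmaFiberEquiv, Equiv.coe_fn_mk,
      norm_mul, mul_pow, hv]
    change ‖ρ (v : V)‖ ^ 2 * ‖h (Φ v)‖ ^ 2 = _
    rw [hv]
  have hsum : Summable f := by
    rw [summable_sigma_of_nonneg (fun x => by simp only [hf, Function.comp_apply]; exact sq_nonneg _)]
    exact ⟨fun w => (hfib w).summable,
      by simpa only [fun w => (hfib w).tsum_eq] using hS.summable⟩
  have := hsum.hasSum.sigma hfib
  rw [hS.unique this]; exact hsum.hasSum

private lemma hasSum_sq {V : Type*} (h : lp (fun _ : V => ℂ) 2) :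
    HasSum (fun v => ‖h v‖ ^ 2) (‖h‖ ^ 2) := by
  have := lp.hasSum_norm (p := 2) (by norm_num) h
  simpa only [ENNReal.toReal_ofNat, Real.rpow_two] using this

theorem stmt11 {V : Type*} (Φ : V → V) (ρ : V → ℂ) :
    (∃ T : lp (fun _ : V => ℂ) 2 →L[ℂ] lp (fun _ : V => ℂ) 2,
        (∀ (h : lp (fun _ : V => ℂ) 2) (v : V), (T h : ∀ _ : V, ℂ) v = ρ v * h (Φ v)) ∧
        ∀ h : lp (fun _ : V => ℂ) 2, ‖T h‖ = ‖h‖) ↔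
      (Function.Surjective Φ ∧
        ∀ v : V, HasSum (fun w : (Φ ⁻¹' {v} : Set V) => ‖ρ (w : V)‖ ^ 2) 1) := by
  classical
  constructor
  · rintro ⟨T, hT, hiso⟩
    have hsums : ∀ v : V, HasSum (fun w : (Φ ⁻¹' {v} : Set V) => ‖ρ (w : V)‖ ^ 2) 1 := by
      intro w
      set s : lp (fun _ : V => ℂ) 2 := lp.single 2 w (1:ℂ) with hs
      have hsn : ‖s‖ = 1 := by
        have := lp.norm_single (p := 2) (E := fun _ : V => ℂ) (by norm_num) w (1:ℂ)
        rw [hs]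
        rw [this]
        simp
      have hA : HasSum (fun v => ‖(T s : ∀ _ : V, ℂ) v‖ ^ 2) 1 := by
        have := hasSum_sq (T s)
        rwa [hiso s, hsn, one_pow] at this
      have hval : ∀ v : V, (T s : ∀ _ : V, ℂ) v = if Φ v = w then ρ v else 0 := by
        intro v
        rw [hT s v, hs]
        rcases eq_or_ne (Φ v) w with hvw | hvw
        · rw [if_pos hvw, hvw, lp.single_apply_self, mul_one]
        · rw [if_neg hvw, lp.single_apply_ne 2 w _ hvw, mul_zero]
      have hsupp : Function.support (fun v => ‖(T s : ∀ _ : V, ℂ) v‖ ^ 2) ⊆ Φ ⁻¹' {w} := by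
        intro v hv
        simp only [Function.mem_support, hval v] at hv
        by_contra hc
        simp only [Set.mem_preimage, Set.mem_singleton_iff] at hc
        rw [if_neg hc] at hv
        simp at hv
      have := (hasSum_subtype_iff_of_support_subset hsupp).2 hA
      refine this.congr_fun fun v => ?_
      have hv : Φ (v : V) = w := v.2
      simp only [Function.comp_apply]
      rw [hval, if_pos hv]
    refine ⟨?_, hsums⟩
    intro v
    by_contra hc
    push_neg at hc
    have : IsEmpty (Φ ⁻¹' {v} : Set V) := by
      rw [Set.isEmpty_coe_sort, Set.eq_empty_iff_forall_notMem]
      intro w hw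
      exact hc w hw
    exact one_ne_zero ((hsums v).unique hasSum_empty)
  · rintro ⟨-, hρ⟩
    have hmem : ∀ h : lp (fun _ : V => ℂ) 2, Memℓp (fun v => ρ v * h (Φ v)) 2 := by
      intro h
      apply memℓp_gen
      have := key11 Φ ρ hρ h (hasSum_sq h)
      simpa only [ENNReal.toReal_ofNat, Real.rpow_two] using this.summable
    set Tl : lp (fun _ : V => ℂ) 2 →ₗ[ℂ] lp (fun _ : V => ℂ) 2 :=
      { toFun := fun h => ⟨fun v => ρ v * h (Φ v), hmem h⟩
        map_add' := by
          intro g h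
          ext v
          simp only [lp.coeFn_add, Pi.add_apply]
          change ρ v * (g (Φ v) + h (Φ v)) = ρ v * g (Φ v) + ρ v * h (Φ v)
          ring
        map_smul' := by
          intro c h
          ext v
          simp only [lp.coeFn_smul, Pi.smul_apply, RingHom.id_apply, smul_eq_mul]
          change ρ v * (c * h (Φ v)) = c * (ρ v * h (Φ v))
          ring } with hTl
    have hnorm : ∀ h : lp (fun _ : V => ℂ) 2, ‖Tl h‖ = ‖h‖ := by
      intro h
      have h1 : HasSum (fun v => ‖(Tl h : ∀ _ : V, ℂ) v‖ ^ 2) (‖Tl h‖ ^ 2) := hasSum_sq (Tl h)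
      have h2 : HasSum (fun v => ‖ρ v * h (Φ v)‖ ^ 2) (‖h‖ ^ 2) :=
        key11 Φ ρ hρ h (hasSum_sq h)
      have heq : ‖Tl h‖ ^ 2 = ‖h‖ ^ 2 := h1.unique (by exact h2)
      calc ‖Tl h‖ = Real.sqrt (‖Tl h‖ ^ 2) := (Real.sqrt_sq (norm_nonneg _)).symm
        _ = Real.sqrt (‖h‖ ^ 2) := by rw [heq]
        _ = ‖h‖ := Real.sqrt_sq (norm_nonneg _)
    exact ⟨(LinearIsometry.mk Tl hnorm).toContinuousLinearMap, fun h v => rfl, hnorm⟩
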